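/- Linearity of the relaxed (Lagrangian) value functions (Lemma EC.1): for every family of Lagrange multipliers μ, the relaxed value functions satisfy J̃_t^k(y,q;μ) = Σ_{i∈L} α_{it}^k(q)·y_i + β_t^k(q) for all t,q ∈ {1,…,T}, k ∈ {1,…,K} and all y ∈ ℤ^L, where α and β are the slopes and intercepts defined by the stated recursions. -/

import Mathlib

open MeasureTheory Finset

/-- Linearity of the relaxed (Lagrangian) value functions: for any family of Lagrange
multipliers `μ`, the relaxed value functions satisfy
`J̃_t^k(y,q;μ) = Σ_{i∈L} α_{it}^k(q) y_i + β_t^k(q)` where `α` and `β` are the slopes and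
intercepts computed by the stated backward recursions. -/
theorem lagrangian_value_function_linear
    {Ω : Type*} [MeasurableSpace Ω] (Pr : Measure Ω) [IsProbabilityMeasure Pr]
    (K T : ℕ) (hK : 1 ≤ K) (hT : 1 ≤ T)
    (ε : ℝ) (hε : 0 < ε)
    (D0 : ℕ) (hD0 : D0 ∈ Finset.Icc 1 T)
    (D : ℕ → Ω → ℕ) (hDmeas : ∀ k, Measurable (D k))
    (hD0as : ∀ᵐ ω ∂Pr, D 0 ω = D0)
    (hDrange : ∀ k ∈ Finset.Icc 1 K, ∀ᵐ ω ∂Pr, D k ω ∈ Finset.Icc 1 T)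
    (hMarkov : ∀ d : ℕ → ℕ, d 0 = D0 → (∀ k ∈ Finset.Icc 1 K, d k ∈ Finset.Icc 1 T) →
      (Pr {ω | ∀ k ∈ Finset.Icc 1 K, D k ω = d k}).toReal =
        ∏ k ∈ Finset.Icc 1 K,
          (Pr {ω | D k ω = d k ∧ D (k - 1) ω = d (k - 1)}).toReal /
            (Pr {ω | D (k - 1) ω = d (k - 1)}).toReal)
    (hLB : ∀ k < K, ∀ p ∈ Finset.Icc 1 T, ∀ q ∈ Finset.Icc 1 T,
      0 < Pr {ω | D k ω = q} →
      ε ≤ (Pr {ω | D (k + 1) ω = p ∧ D k ω = q}).toReal / (Pr {ω | D k ω = q}).toReal)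
    (θ : ℕ → ℕ → ℕ → ℝ)
    (hθ : ∀ k ∈ Finset.Icc 1 K, ∀ t ∈ Finset.Icc 1 T, ∀ q ∈ Finset.Icc 1 T,
      θ k t q = (Pr {ω | t + 1 ≤ D k ω ∧ D (k - 1) ω = q}).toReal /
        (Pr {ω | t ≤ D k ω ∧ D (k - 1) ω = q}).toReal)
    (L J : Type*) [Fintype L] [Nonempty L] [Fintype J] [Nonempty J]
    (f : J → ℝ) (hf : ∀ j, 0 ≤ f j)
    (a : L → J → ℕ) (ha : ∀ i j, a i j ≤ 1)
    (lam : J → ℕ → ℕ → ℝ)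
    (hlam0 : ∀ j k t, 0 ≤ lam j k t)
    (hlam1 : ∀ k ∈ Finset.Icc 1 K, ∀ t ∈ Finset.Icc 1 T, ∑ j, lam j k t = 1)
    (mul : L → ℕ → ℕ → ℕ → ℝ)
    (Jt : ℕ → ℕ → (L → ℤ) → ℕ → ℝ)
    (hJtbd1 : ∀ y q, Jt (K + 1) 1 y q = 0)
    (hJtbd2 : ∀ k ∈ Finset.Icc 1 K, ∀ y q, Jt k (T + 1) y q = 0)
    (hJtrec : ∀ k ∈ Finset.Icc 1 K, ∀ t ∈ Finset.Icc 1 T, ∀ y : L → ℤ, ∀ q ∈ Finset.Icc 1 T,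
      IsGreatest
        {r : ℝ | ∃ v : J → ℕ, (∀ j, v j ≤ 1) ∧
          r = (∑ j, lam j k t *
            ((f j - ∑ i, (a i j : ℝ) * mul i k t q) * (v j : ℝ) +
              θ k t q * Jt k (t + 1) (fun i => y i - (a i j * v j : ℕ)) q +
              (1 - θ k t q) * Jt (k + 1) 1 (fun i => y i - (a i j * v j : ℕ)) t)) +
            ∑ i, mul i k t q * (y i : ℝ)}
        (Jt k t y q))
    (α : L → ℕ → ℕ → ℕ → ℝ) (β : ℕ → ℕ → ℕ → ℝ)
    (hαbd1 : ∀ i q, α i (K + 1) 1 q = 0)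
    (hαbd2 : ∀ i, ∀ k ∈ Finset.Icc 1 K, ∀ q, α i k (T + 1) q = 0)
    (hβbd1 : ∀ q, β (K + 1) 1 q = 0)
    (hβbd2 : ∀ k ∈ Finset.Icc 1 K, ∀ q, β k (T + 1) q = 0)
    (hαrec : ∀ i, ∀ k ∈ Finset.Icc 1 K, ∀ t ∈ Finset.Icc 1 T, ∀ q ∈ Finset.Icc 1 T,
      α i k t q = mul i k t q + θ k t q * α i k (t + 1) q + (1 - θ k t q) * α i (k + 1) 1 t)
    (hβrec : ∀ k ∈ Finset.Icc 1 K, ∀ t ∈ Finset.Icc 1 T, ∀ q ∈ Finset.Icc 1 T,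
      β k t q = (∑ j, lam j k t * max (f j - ∑ i, (a i j : ℝ) * α i k t q) 0) +
        θ k t q * β k (t + 1) q + (1 - θ k t q) * β (k + 1) 1 t) :
    ∀ k ∈ Finset.Icc 1 K, ∀ t ∈ Finset.Icc 1 T, ∀ q ∈ Finset.Icc 1 T, ∀ y : L → ℤ,
      Jt k t y q = (∑ i, α i k t q * (y i : ℝ)) + β k t q := by

  have inner : ∀ k ∈ Finset.Icc 1 K,
      (∀ q' ∈ Finset.Icc 1 T, ∀ y : L → ℤ,
        Jt (k+1) 1 y q' = (∑ i, α i (k+1) 1 q' * (y i : ℝ)) + β (k+1) 1 q') →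
      ∀ n : ℕ, ∀ t : ℕ, t + n = T + 1 → 1 ≤ t → ∀ q ∈ Finset.Icc 1 T, ∀ y : L → ℤ,
        Jt k t y q = (∑ i, α i k t q * (y i : ℝ)) + β k t q := by
    intro k hk hnext n
    induction n with
    | zero =>
        intro t ht _ q _ y
        have hteq : t = T + 1 := by omega
        subst hteq
        rw [hJtbd2 k hk y q, hβbd2 k hk q]
        simp [hαbd2 _ k hk]
    | succ n ih =>
        intro t ht ht1 q hq y
        have htT : t ∈ Finset.Icc 1 T := by rw [Finset.mem_Icc]; omega
        have IHt : ∀ z : L → ℤ, Jt k (t+1) z q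
            = (∑ i, α i k (t+1) q * (z i : ℝ)) + β k (t+1) q :=
          fun z => ih (t+1) (by omega) (by omega) q hq z
        have IHk : ∀ z : L → ℤ, Jt (k+1) 1 z t
            = (∑ i, α i (k+1) 1 t * (z i : ℝ)) + β (k+1) 1 t :=
          fun z => hnext t htT z
        set c : J → ℝ := fun j => f j - ∑ i, (a i j : ℝ) * α i k t q with hc
        have hcd : ∀ j, c j = f j - ∑ i, (a i j : ℝ) * α i k t q := fun j => rfl
        obtain ⟨hmem, hub⟩ := hJtrec k hk t htT y q hq
        have key : ∀ v : J → ℕ, (∀ j, v j ≤ 1) →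
            ((∑ j, lam j k t *
              ((f j - ∑ i, (a i j : ℝ) * mul i k t q) * (v j : ℝ) +
                θ k t q * Jt k (t + 1) (fun i => y i - (a i j * v j : ℕ)) q +
                (1 - θ k t q) * Jt (k + 1) 1 (fun i => y i - (a i j * v j : ℕ)) t)) +
              ∑ i, mul i k t q * (y i : ℝ))
            = (∑ j, lam j k t * (c j * (v j : ℝ))) +
              (θ k t q * β k (t+1) q + (1 - θ k t q) * β (k+1) 1 t
                + ∑ i, α i k t q * (y i : ℝ)) := by
          intro v hv
          have e1 : ∀ j : J, (∑ i, α i k (t+1) q * ((y i - (a i j * v j : ℕ) : ℤ) : ℝ))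
              = (∑ i, α i k (t+1) q * (y i : ℝ))
                - (∑ i, (a i j : ℝ) * α i k (t+1) q) * (v j : ℝ) := by
            intro j
            rw [Finset.sum_mul, ← Finset.sum_sub_distrib]
            refine Finset.sum_congr rfl fun i _ => ?_
            push_cast
            ring
          have e2 : ∀ j : J, (∑ i, α i (k+1) 1 t * ((y i - (a i j * v j : ℕ) : ℤ) : ℝ))
              = (∑ i, α i (k+1) 1 t * (y i : ℝ))
                - (∑ i, (a i j : ℝ) * α i (k+1) 1 t) * (v j : ℝ) := by
            intro j
            rw [Finset.sum_mul, ← Finset.sum_sub_distrib]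
            refine Finset.sum_congr rfl fun i _ => ?_
            push_cast
            ring
          have ec : ∀ j : J, c j = f j - ((∑ i, (a i j : ℝ) * mul i k t q)
              + θ k t q * (∑ i, (a i j : ℝ) * α i k (t+1) q)
              + (1 - θ k t q) * (∑ i, (a i j : ℝ) * α i (k+1) 1 t)) := by
            intro j
            have h2 : (∑ i, (a i j : ℝ) * α i k t q)
                = (∑ i, (a i j : ℝ) * mul i k t q)
                  + θ k t q * (∑ i, (a i j : ℝ) * α i k (t+1) q)
                  + (1 - θ k t q) * (∑ i, (a i j : ℝ) * α i (k+1) 1 t) := by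
              rw [Finset.mul_sum, Finset.mul_sum, ← Finset.sum_add_distrib,
                ← Finset.sum_add_distrib]
              refine Finset.sum_congr rfl fun i _ => ?_
              rw [hαrec i k hk t htT q hq]; ring
            rw [hcd j, h2]
          have eα : (∑ i, α i k t q * (y i : ℝ))
              = (∑ i, mul i k t q * (y i : ℝ))
                + θ k t q * (∑ i, α i k (t+1) q * (y i : ℝ))
                + (1 - θ k t q) * (∑ i, α i (k+1) 1 t * (y i : ℝ)) := by
            rw [Finset.mul_sum, Finset.mul_sum, ← Finset.sum_add_distrib,
              ← Finset.sum_add_distrib]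
            refine Finset.sum_congr rfl fun i _ => ?_
            rw [hαrec i k hk t htT q hq]; ring
          simp only [IHt, IHk]
          rw [eα]
          have hsum : (∑ j, lam j k t *
              ((f j - ∑ i, (a i j : ℝ) * mul i k t q) * (v j : ℝ) +
                θ k t q * ((∑ i, α i k (t+1) q * ((y i - (a i j * v j : ℕ) : ℤ) : ℝ))
                  + β k (t+1) q) +
                (1 - θ k t q) * ((∑ i, α i (k+1) 1 t * ((y i - (a i j * v j : ℕ) : ℤ) : ℝ))
                  + β (k+1) 1 t)))
              = ∑ j, (lam j k t * (c j * (v j : ℝ))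
                + lam j k t * (θ k t q * ((∑ i, α i k (t+1) q * (y i : ℝ)) + β k (t+1) q)
                  + (1 - θ k t q) * ((∑ i, α i (k+1) 1 t * (y i : ℝ)) + β (k+1) 1 t))) := by
            refine Finset.sum_congr rfl fun j _ => ?_
            rw [e1 j, e2 j, ec j]
            ring
          rw [hsum, Finset.sum_add_distrib, ← Finset.sum_mul, hlam1 k hk t htT, one_mul]
          ring
        set M : ℝ := (∑ j, lam j k t * max (c j) 0)
          + (θ k t q * β k (t+1) q + (1 - θ k t q) * β (k+1) 1 t
            + ∑ i, α i k t q * (y i : ℝ)) with hM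
        have hle1 : Jt k t y q ≤ M := by
          obtain ⟨v, hv, hr⟩ := hmem
          rw [hr, key v hv, hM]
          refine add_le_add (Finset.sum_le_sum fun j _ => ?_) le_rfl
          rcases Nat.le_one_iff_eq_zero_or_eq_one.mp (hv j) with h | h
          · simp only [h, Nat.cast_zero, mul_zero]
            exact mul_nonneg (hlam0 j k t) (le_max_right _ _)
          · simp only [h, Nat.cast_one, mul_one]
            exact mul_le_mul_of_nonneg_left (le_max_left _ _) (hlam0 j k t)
        have hle2 : M ≤ Jt k t y q := by
          apply hub
          refine ⟨fun j => if 0 ≤ c j then 1 else 0, fun j => by by_cases h : 0 ≤ c j <;> simp [h], ?_⟩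
          rw [key _ (fun j => by by_cases h : 0 ≤ c j <;> simp [h]), hM]
          congr 1
          refine Finset.sum_congr rfl fun j _ => ?_
          by_cases h : 0 ≤ c j
          · simp [h, max_eq_left h]
          · simp [h, max_eq_right (le_of_not_ge h)]
        have hJt : Jt k t y q = M := le_antisymm hle1 hle2
        rw [hJt, hM, hβrec k hk t htT q hq]
        have hmx : ∀ j, max (f j - ∑ i, (a i j : ℝ) * α i k t q) 0 = max (c j) 0 :=
          fun j => rfl
        simp only [hmx]
        ring
  have outer : ∀ m : ℕ, ∀ k : ℕ, k + m = K + 1 → 1 ≤ k →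
      ∀ q ∈ Finset.Icc 1 T, ∀ y : L → ℤ,
        Jt k 1 y q = (∑ i, α i k 1 q * (y i : ℝ)) + β k 1 q := by
    intro m
    induction m with
    | zero =>
        intro k hkm _ q _ y
        have : k = K + 1 := by omega
        subst this
        rw [hJtbd1 y q, hβbd1 q]
        simp [hαbd1]
    | succ m ih =>
        intro k hkm hk1 q hq y
        have hkK : k ∈ Finset.Icc 1 K := by rw [Finset.mem_Icc]; omega
        exact inner k hkK (fun q' hq' z => ih (k+1) (by omega) (by omega) q' hq' z)
          T 1 (by omega) (by omega) q hq y
  intro k hk t ht q hq y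
  have hk' := Finset.mem_Icc.mp hk
  have ht' := Finset.mem_Icc.mp ht
  exact inner k hk
    (fun q' hq' z => outer (K - k) (k+1) (by omega) (by omega) q' hq' z)
    (T + 1 - t) t (by omega) (by omega) q hq y
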